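/- arXiv:2004.13311 — 2 statements merged into one kernel-verified Lean document; each statement's English description precedes it below -/
import Mathlib

section
/- Let x ∈ ℓ¹(ℤ) be a complex-valued summable sequence and define its Fourier series x̂(t) = Σ_{m∈ℤ} x(m) e^{imt} for t ∈ (-π,π). Then for every n ∈ ℤ, the n-th Fourier coefficient of the function t ↦ sgn(t)·x̂(t) satisfies (1/2π) ∫_{-π}^{π} sgn(t)·x̂(t)·e^{-int} dt = 2i·(𝓗_d x)(n), where 𝓗_d is the discrete Hilbert-type transform. -/
open Complex Real MeasureTheory

lemma measurable_realSign : Measurable Real.sign := by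
  unfold Real.sign
  exact Measurable.ite (measurableSet_lt measurable_id measurable_const)
    measurable_const (Measurable.ite (measurableSet_lt measurable_const measurable_id)
      measurable_const measurable_const)

lemma abs_realSign_le (t : ℝ) : |Real.sign t| ≤ 1 := by
  rcases lt_trichotomy t 0 with h|h|h
  · simp [Real.sign_of_neg h]
  · simp [h, Real.sign_zero]
  · simp [Real.sign_of_pos h]

lemma norm_sign_exp_le (k : ℤ) (t : ℝ) :
    ‖(Real.sign t : ℂ) * Complex.exp (Complex.I * k * t)‖ ≤ 1 := by
  rw [norm_mul]
  calc ‖(Real.sign t : ℂ)‖ * ‖Complex.exp (Complex.I * k * t)‖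
      = |Real.sign t| * 1 := by simp [Complex.norm_exp]
    _ ≤ 1 := by rw [mul_one]; exact abs_realSign_le t

lemma sign_exp_intervalIntegrable (k : ℤ) (a b : ℝ) :
    IntervalIntegrable (fun t : ℝ => (Real.sign t : ℂ) * Complex.exp (Complex.I * k * t))
      MeasureTheory.volume a b := by
  rw [intervalIntegrable_iff]
  apply Integrable.mono' ((integrableOn_const_iff (C := (1:ℝ))).mpr (Or.inr measure_Ioc_lt_top))
  · exact ((Complex.measurable_ofReal.comp measurable_realSign).mul
      ((Complex.continuous_exp.comp (by continuity)).measurable)).aestronglyMeasurable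
  · exact Filter.Eventually.of_forall fun t => norm_sign_exp_le k t

lemma integral_sign_exp (k : ℤ) :
    ∫ t in (-π)..π, (Real.sign t : ℂ) * Complex.exp (Complex.I * k * t) =
      if Odd k then 4 * Complex.I / k else 0 := by
  have h0 : ∀ᵐ t : ℝ, t ≠ 0 := by
    rw [ae_iff]
    simpa using Real.volume_singleton
  have hsplit := intervalIntegral.integral_add_adjacent_intervals
    (sign_exp_intervalIntegrable k (-π) 0) (sign_exp_intervalIntegrable k 0 π)
  rw [← hsplit]
  have hneg : ∫ t in (-π)..0, (Real.sign t : ℂ) * Complex.exp (Complex.I * k * t) =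
      ∫ t in (-π)..0, -Complex.exp (Complex.I * k * t) := by
    apply intervalIntegral.integral_congr_ae
    filter_upwards [h0] with t ht hmem
    rw [Set.uIoc_of_le (by linarith [Real.pi_pos] : (-π:ℝ) ≤ 0)] at hmem
    have : t < 0 := lt_of_le_of_ne hmem.2 ht
    simp [Real.sign_of_neg this]
  have hpos : ∫ t in (0:ℝ)..π, (Real.sign t : ℂ) * Complex.exp (Complex.I * k * t) =
      ∫ t in (0:ℝ)..π, Complex.exp (Complex.I * k * t) := by
    apply intervalIntegral.integral_congr_ae
    filter_upwards with t hmem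
    rw [Set.uIoc_of_le Real.pi_pos.le] at hmem
    simp [Real.sign_of_pos hmem.1]
  rw [hneg, hpos, intervalIntegral.integral_neg]
  rcases eq_or_ne k 0 with rfl | hk
  · norm_num
  · have hc : (Complex.I * k) ≠ 0 := by
      simp [Complex.I_ne_zero, Complex.ext_iff]
      exact_mod_cast hk
    have hepi : Complex.exp (Complex.I * k * (π:ℝ)) = (-1 : ℂ) ^ k := by
      rw [show Complex.I * (k:ℂ) * (π:ℝ) = (k:ℂ) * ((π:ℝ) * Complex.I) by ring,
        Complex.exp_int_mul, Complex.exp_pi_mul_I]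
    have hemi : Complex.exp (Complex.I * k * ((-π:ℝ):ℂ)) = (-1 : ℂ) ^ k := by
      push_cast
      rw [show Complex.I * (k:ℂ) * (-(π:ℂ)) = ((-k : ℤ):ℂ) * ((π:ℝ) * Complex.I) by push_cast; ring,
        Complex.exp_int_mul, Complex.exp_pi_mul_I, zpow_neg]
      rcases Int.even_or_odd k with he | ho
      · rw [he.neg_one_zpow]; norm_num
      · rw [ho.neg_one_zpow]; norm_num
    have h1 : ∫ t in (0:ℝ)..π, Complex.exp (Complex.I * k * t) =
        ((-1:ℂ)^k - 1) / (Complex.I * k) := by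
      rw [show (fun t : ℝ => Complex.exp (Complex.I * k * t)) =
        (fun t : ℝ => Complex.exp ((Complex.I * k) * t)) by funext t; ring_nf]
      rw [integral_exp_mul_complex hc, hepi]
      norm_num
    have h2 : ∫ t in (-π)..(0:ℝ), Complex.exp (Complex.I * k * t) =
        (1 - (-1:ℂ)^k) / (Complex.I * k) := by
      rw [show (fun t : ℝ => Complex.exp (Complex.I * k * t)) =
        (fun t : ℝ => Complex.exp ((Complex.I * k) * t)) by funext t; ring_nf]
      rw [integral_exp_mul_complex hc, hemi]
      norm_num
    rw [h1, h2]
    rcases Int.even_or_odd k with he | ho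
    · rw [he.neg_one_zpow, if_neg (Int.not_odd_iff_even.mpr he)]
      ring
    · rw [ho.neg_one_zpow, if_pos ho]
      have hkc : (k : ℂ) ≠ 0 := by exact_mod_cast hk
      field_simp
      linear_combination (-4:ℂ) * Complex.I_sq

/-- The discrete Hilbert-type transform:
`(𝓗_d x)(n) = (1/π) Σ_{m ∈ ℤ, m - n odd} x(m)/(m - n)`. -/
noncomputable def discreteHilbert (x : ℤ → ℂ) (n : ℤ) : ℂ :=
  (1 / (π : ℂ)) * ∑' m : ℤ, if Odd (m - n) then x m / ((m - n : ℤ) : ℂ) else 0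

/-- For `x ∈ ℓ¹(ℤ)` with Fourier series `x̂(t) = Σ_m x(m) e^{imt}`, the `n`-th Fourier
coefficient of `t ↦ sgn(t)·x̂(t)` equals `2i·(𝓗_d x)(n)`. -/
theorem fourier_coeff_sign_mul_eq_discreteHilbert
    (x : ℤ → ℂ) (hx : Summable fun m : ℤ => ‖x m‖) (n : ℤ) :
    (1 / (2 * (π : ℂ))) *
        ∫ t in (-π)..π,
          (Real.sign t : ℂ) * (∑' m : ℤ, x m * Complex.exp (Complex.I * m * t)) *
            Complex.exp (-(Complex.I * n * t)) =
      2 * Complex.I * discreteHilbert x n := by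
  have hpi : (-π : ℝ) ≤ π := by linarith [Real.pi_pos]
  set F : ℤ → ℝ → ℂ := fun m t =>
    x m * ((Real.sign t : ℂ) * Complex.exp (Complex.I * ((m - n : ℤ) : ℂ) * t)) with hF
  have key : ∀ t : ℝ,
      (Real.sign t : ℂ) * (∑' m : ℤ, x m * Complex.exp (Complex.I * m * t)) *
        Complex.exp (-(Complex.I * n * t)) = ∑' m : ℤ, F m t := by
    intro t
    rw [show (Real.sign t : ℂ) * (∑' m : ℤ, x m * Complex.exp (Complex.I * m * t)) *
        Complex.exp (-(Complex.I * n * t)) =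
        (∑' m : ℤ, x m * Complex.exp (Complex.I * m * t)) *
          ((Real.sign t : ℂ) * Complex.exp (-(Complex.I * n * t))) by ring, ← tsum_mul_right]
    refine tsum_congr fun m => ?_
    have hexp : Complex.exp (Complex.I * m * t) * Complex.exp (-(Complex.I * n * t)) =
        Complex.exp (Complex.I * ((m - n : ℤ) : ℂ) * t) := by
      rw [← Complex.exp_add]
      congr 1
      push_cast
      ring
    rw [hF]
    simp only
    rw [← hexp]
    ring
  have hmeas : ∀ m : ℤ, AEStronglyMeasurable (F m) (volume.restrict (Set.Ioc (-π) π)) := by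
    intro m
    exact (((Complex.measurable_ofReal.comp measurable_realSign).mul
      ((Complex.continuous_exp.comp (by continuity)).measurable)).const_mul
        (x m)).aestronglyMeasurable
  have hfin : ∑' m : ℤ, (‖x m‖₊ : ENNReal) ≠ ⊤ :=
    ENNReal.tsum_coe_ne_top_iff_summable.mpr (NNReal.summable_coe.mp (by simpa using hx))
  have hb : ∀ m : ℤ, ∫⁻ t in Set.Ioc (-π) π, ‖F m t‖₊ ∂volume ≤
      (‖x m‖₊ : ENNReal) * ENNReal.ofReal (2 * π) := by
    intro m
    calc ∫⁻ t in Set.Ioc (-π) π, ‖F m t‖₊ ∂volume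
        ≤ ∫⁻ _ in Set.Ioc (-π) π, (‖x m‖₊ : ENNReal) ∂volume := by
          refine lintegral_mono fun t => ?_
          rw [ENNReal.coe_le_coe, ← NNReal.coe_le_coe]
          simp only [coe_nnnorm, hF]
          rw [norm_mul]
          exact mul_le_of_le_one_right (norm_nonneg _) (norm_sign_exp_le (m - n) t)
      _ = (‖x m‖₊ : ENNReal) * ENNReal.ofReal (2 * π) := by
          rw [setLIntegral_const, Real.volume_Ioc]
          congr 1
          ring_nf
  have hbound : ∑' m : ℤ, ∫⁻ t in Set.Ioc (-π) π, ‖F m t‖₊ ∂volume ≠ ⊤ := by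
    refine ne_top_of_le_ne_top ?_ (ENNReal.tsum_le_tsum hb)
    rw [ENNReal.tsum_mul_right]
    exact ENNReal.mul_ne_top hfin ENNReal.ofReal_ne_top
  have hterm : ∀ m : ℤ, ∫ t in Set.Ioc (-π) π, F m t =
      x m * (if Odd (m - n) then 4 * Complex.I / ((m - n : ℤ) : ℂ) else 0) := by
    intro m
    rw [hF]
    simp only
    rw [MeasureTheory.integral_const_mul]
    congr 1
    rw [← intervalIntegral.integral_of_le hpi]
    exact integral_sign_exp (m - n)
  simp_rw [key]
  rw [intervalIntegral.integral_of_le hpi, MeasureTheory.integral_tsum hmeas hbound]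
  simp_rw [hterm]
  have hsimp : ∀ m : ℤ,
      x m * (if Odd (m - n) then 4 * Complex.I / ((m - n : ℤ) : ℂ) else 0) =
        (4 * Complex.I) * (if Odd (m - n) then x m / ((m - n : ℤ) : ℂ) else 0) := by
    intro m
    split_ifs with h
    · ring
    · ring
  simp_rw [hsimp]
  rw [tsum_mul_left, discreteHilbert]
  have hπ : (π : ℂ) ≠ 0 := Complex.ofReal_ne_zero.mpr Real.pi_ne_zero
  field_simp
  ring
end

section
/- Let μ : ℕ → [0,∞) be a nonincreasing nonnegative sequence. Then for every n ≥ 0, (1/π) Σ_{m≥0} μ(m)/(2m + 2n + 1) ≥ (1/(8π)) · (S_d μ)(n), where the inequality is understood in [0,∞]. Consequently, if x : ℤ → [0,∞) is defined by x(2k+1) = μ(k) and x = 0 elsewhere, then (𝓗_d x)(−2n) ≥ (1/(8π))·(S_d μ)(n) for all n ≥ 0. -/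
open Real
open scoped ENNReal NNReal

/-- The sequence `x : ℤ → ℝ≥0` with `x(2k+1) = μ(k)` for `k ≥ 0` and `x(m) = 0`
for all other `m`. -/
noncomputable def oddSupported (μ : ℕ → ℝ≥0) (m : ℤ) : ℝ≥0 :=
  if Odd m ∧ 0 < m then μ ((m - 1) / 2).toNat else 0

/-- The discrete Calderón operator:
`(S_d μ)(n) = (1/(n+1)) Σ_{k=0}^{n} μ(k) + Σ_{k=n}^{∞} μ(k)/(k+1)`, in `[0,∞]`. -/
noncomputable def discreteCalderon (μ : ℕ → ℝ≥0) (n : ℕ) : ℝ≥0∞ :=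
  ((n : ℝ≥0∞) + 1)⁻¹ * ∑ k ∈ Finset.range (n + 1), (μ k : ℝ≥0∞) +
    ∑' k : ℕ, if n ≤ k then (μ k : ℝ≥0∞) / ((k : ℝ≥0∞) + 1) else 0

lemma calderon_le_eight_mul (μ : ℕ → ℝ≥0) (n : ℕ) :
    discreteCalderon μ n ≤
      8 * ∑' m : ℕ, (μ m : ℝ≥0∞) / ((2 * m + 2 * n + 1 : ℕ) : ℝ≥0∞) := by
  set A : ℝ≥0∞ := ∑' m : ℕ, (μ m : ℝ≥0∞) / ((2 * m + 2 * n + 1 : ℕ) : ℝ≥0∞) with hA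
  have hX : ((n : ℝ≥0∞) + 1)⁻¹ * ∑ k ∈ Finset.range (n + 1), (μ k : ℝ≥0∞) ≤ 4 * A := by
    set S : ℝ≥0∞ := ∑ k ∈ Finset.range (n + 1), (μ k : ℝ≥0∞) with hS
    have h1 : S / ((4 * (n + 1) : ℕ) : ℝ≥0∞) ≤ A := by
      have : ∑ k ∈ Finset.range (n + 1),
          (μ k : ℝ≥0∞) / ((4 * (n + 1) : ℕ) : ℝ≥0∞) ≤ A := by
        refine le_trans (Finset.sum_le_sum fun k hk => ?_)
          (ENNReal.sum_le_tsum (Finset.range (n + 1)))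
        refine ENNReal.div_le_div_left ?_ _
        have hk' : k ≤ n := Nat.lt_succ_iff.mp (Finset.mem_range.mp hk)
        exact_mod_cast Nat.cast_le.mpr (by omega : 2 * k + 2 * n + 1 ≤ 4 * (n + 1))
      simpa [hS, div_eq_mul_inv, Finset.sum_mul] using this
    have h4 : (4 : ℝ≥0∞) ≠ 0 := by norm_num
    have h4' : (4 : ℝ≥0∞) ≠ ⊤ := by norm_num
    have hrw : ((n : ℝ≥0∞) + 1)⁻¹ * S = 4 * (S / ((4 * (n + 1) : ℕ) : ℝ≥0∞)) := by
      rw [mul_div_assoc']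
      rw [show ((4 * (n + 1) : ℕ) : ℝ≥0∞) = 4 * ((n : ℝ≥0∞) + 1) by push_cast; ring]
      rw [ENNReal.mul_div_mul_left _ _ h4 h4', div_eq_mul_inv, mul_comm]
    rw [hrw]
    exact mul_le_mul_right h1 4
  have hY : (∑' k : ℕ, if n ≤ k then (μ k : ℝ≥0∞) / ((k : ℝ≥0∞) + 1) else 0) ≤ 4 * A := by
    rw [hA, ← ENNReal.tsum_mul_left]
    refine ENNReal.tsum_le_tsum fun k => ?_
    split_ifs with h
    · have hrw : (μ k : ℝ≥0∞) / ((k : ℝ≥0∞) + 1) =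
          4 * (μ k : ℝ≥0∞) / ((4 * (k + 1) : ℕ) : ℝ≥0∞) := by
        rw [show ((4 * (k + 1) : ℕ) : ℝ≥0∞) = 4 * ((k : ℝ≥0∞) + 1) by push_cast; ring]
        rw [ENNReal.mul_div_mul_left _ _ (by norm_num) (by norm_num)]
      rw [hrw, mul_div_assoc]
      refine mul_le_mul_right (ENNReal.div_le_div_left ?_ _) 4
      exact_mod_cast Nat.cast_le.mpr (by omega : 2 * k + 2 * n + 1 ≤ 4 * (k + 1))
    · exact zero_le
  calc discreteCalderon μ n ≤ 4 * A + 4 * A := add_le_add hX hY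
    _ = 8 * A := by ring

/-- For a nonincreasing `μ : ℕ → [0,∞)` one has
`(1/π) Σ_{m ≥ 0} μ(m)/(2m+2n+1) ≥ (1/(8π)) (S_d μ)(n)` in `[0,∞]`; consequently, for
`x` supported on the positive odd integers with `x(2k+1) = μ(k)`, the discrete
Hilbert-type transform satisfies `(𝓗_d x)(-2n) ≥ (1/(8π)) (S_d μ)(n)` for all `n ≥ 0`. -/
theorem discreteHilbert_ge_discreteCalderon (μ : ℕ → ℝ≥0) (hμ : Antitone μ) (n : ℕ) :
    ((ENNReal.ofReal π)⁻¹ *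
        ∑' m : ℕ, (μ m : ℝ≥0∞) / ((2 * m + 2 * n + 1 : ℕ) : ℝ≥0∞) ≥
      (8 * ENNReal.ofReal π)⁻¹ * discreteCalderon μ n) ∧
    ((ENNReal.ofReal π)⁻¹ *
        ∑' m : ℤ, (if Odd (m + 2 * (n : ℤ)) then
          (oddSupported μ m : ℝ≥0∞) / ENNReal.ofReal ((m : ℝ) + 2 * n) else 0) ≥
      (8 * ENNReal.ofReal π)⁻¹ * discreteCalderon μ n) := by
  set A : ℝ≥0∞ := ∑' m : ℕ, (μ m : ℝ≥0∞) / ((2 * m + 2 * n + 1 : ℕ) : ℝ≥0∞) with hA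
  have key : (8 * ENNReal.ofReal π)⁻¹ * discreteCalderon μ n ≤ (ENNReal.ofReal π)⁻¹ * A := by
    rw [ENNReal.mul_inv (Or.inl (by norm_num)) (Or.inl (by norm_num))]
    rw [mul_comm ((8 : ℝ≥0∞)⁻¹) _, mul_assoc]
    refine mul_le_mul_right ?_ _
    rw [ENNReal.inv_mul_le_iff (by norm_num) (by norm_num)]
    exact calderon_le_eight_mul μ n
  constructor
  · exact key
  · refine le_trans key (mul_le_mul_right ?_ _)
    have hinj : Function.Injective (fun k : ℕ => (2 * k + 1 : ℤ)) := by
      intro a b h; simpa using h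
    have := ENNReal.tsum_comp_le_tsum_of_injective hinj
      (fun m : ℤ => if Odd (m + 2 * (n : ℤ)) then
        (oddSupported μ m : ℝ≥0∞) / ENNReal.ofReal ((m : ℝ) + 2 * n) else 0)
    refine le_trans (le_of_eq ?_) this
    refine tsum_congr fun k => ?_
    have hodd : Odd ((2 * (k : ℤ) + 1) + 2 * (n : ℤ)) := ⟨(k : ℤ) + n, by ring⟩
    rw [if_pos hodd]
    have hsupp : oddSupported μ (2 * (k : ℤ) + 1) = μ k := by
      rw [oddSupported, if_pos ⟨⟨(k : ℤ), by ring⟩, by positivity⟩]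
      norm_num
    rw [hsupp]
    congr 1
    rw [show (((2 * (k : ℤ) + 1) : ℤ) : ℝ) + 2 * (n : ℝ) =
        ((2 * k + 2 * n + 1 : ℕ) : ℝ) by push_cast; ring, ENNReal.ofReal_natCast]
end
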